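/- arXiv:2406.11468 — 3 statements merged into one kernel-verified Lean document; each statement's English description precedes it below -/
import Mathlib

section
/- Let E be a fractional Brauer configuration and let e₁, …, e_n ∈ E (n ≥ 1) be such that P(g·e_i) = P(e_{i+1}) for 1 ≤ i ≤ n-1. Then the following are equivalent: (1) there exists e ∈ E with L(g^{i-1}·e) = L(e_i) for all 1 ≤ i ≤ n; (2) the intersection ⋂_{i=1}^{n} g^{n-i}·L(e_i) is nonempty. -/
/-- A fractional Brauer configuration `E = (E, P, L, d)`:
a `G`-set `E` for `G = ⟨g⟩` infinite cyclic (encoded by the permutation `g`,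
so that `g ^ n` for `n : ℤ` gives the `G`-action), two partitions `P` and `L`
of `E` (encoded by the class maps `e ↦ P e`, `e ↦ L e`), and a degree function
`d : E → ℤ₊`, subject to conditions (f1)–(f6). -/
structure FracBrauerConfig (E : Type*) where
  g : Equiv.Perm E
  P : E → Set E
  L : E → Set E
  d : E → ℕ
  d_pos : ∀ e, 0 < d e
  mem_P : ∀ e, e ∈ P e
  P_class : ∀ e₁ e₂, e₂ ∈ P e₁ → P e₁ = P e₂
  mem_L : ∀ e, e ∈ L e
  L_class : ∀ e₁ e₂, e₂ ∈ L e₁ → L e₁ = L e₂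
  /-- (f1) `L(e) ⊆ P(e)` -/
  L_subset_P : ∀ e, L e ⊆ P e
  /-- (f1) each polygon is finite -/
  P_finite : ∀ e, (P e).Finite
  /-- (f2) -/
  f2 : ∀ e₁ e₂, L e₁ = L e₂ → P (g e₁) = P (g e₂)
  /-- (f3) `d` is constant on `⟨g⟩`-orbits -/
  f3 : ∀ (e : E) (n : ℤ), d ((g ^ n) e) = d e
  /-- (f4) -/
  f4 : ∀ e₁ e₂, P e₁ = P e₂ ↔ P ((g ^ (d e₁ : ℤ)) e₁) = P ((g ^ (d e₂ : ℤ)) e₂)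
  /-- (f5) -/
  f5 : ∀ e₁ e₂, L e₁ = L e₂ ↔ L ((g ^ (d e₁ : ℤ)) e₁) = L ((g ^ (d e₂ : ℤ)) e₂)
  /-- (f6) no full formal word is a proper right-aligned subword of another -/
  f6 : ∀ e h, (∀ i : ℕ, i < d e → L ((g ^ (i : ℤ)) e) = L ((g ^ (i : ℤ)) h)) → ¬ d e < d h

namespace FracBrauerConfig

variable {E : Type*} (C : FracBrauerConfig E)

/-- The Nakayama map `σ(e) = g^{d(e)}·e`. -/
def sigma (e : E) : E := (C.g ^ (C.d e : ℤ)) e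

/-- A standard sequence `(g^{n-1}·e, …, g·e, e)` is encoded by its base angle `e`
and its length `n`, with `0 ≤ n ≤ d(e)`. -/
abbrev StdSeq := {p : E × ℕ // p.2 ≤ C.d p.1}

/-- The associated formal sequence `L(p)` of a standard sequence: the source polygon
(accounting for the trivial-sequence label `1_{P(e)}`) together with the list of
`L`-classes `L(e), L(g·e), …, L(g^{n-1}·e)`. Two standard sequences are identical
(`p ≡ q`) exactly when their labels agree. -/
def lab (p : C.StdSeq) : Set E × List (Set E) :=
  (C.P p.1.1, (List.range p.1.2).map fun i => C.L ((C.g ^ (i : ℤ)) p.1.1))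

/-- The left complement `^p` of a standard sequence `p`. -/
def lcomp (p : C.StdSeq) : C.StdSeq :=
  ⟨((C.g ^ (p.1.2 : ℤ)) p.1.1, C.d p.1.1 - p.1.2), by rw [C.f3]; exact Nat.sub_le _ _⟩

/-- The right complement `p^∧` of a standard sequence `p`. -/
def rcomp (p : C.StdSeq) : C.StdSeq :=
  ⟨((C.g ^ ((p.1.2 : ℤ) - (C.d p.1.1 : ℤ))) p.1.1, C.d p.1.1 - p.1.2), by
    rw [C.f3]; exact Nat.sub_le _ _⟩

/-- A standard sequence is full when its length is `d(e)`. -/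
def IsFull (p : C.StdSeq) : Prop := p.1.2 = C.d p.1.1

/-- Composition `q·p` of standard sequences (`p` first, then `q`), defined when the
source of `q` is the terminal `g^{len p}·(base p)` of `p` and the total length stays
within the degree bound. -/
def comp (p q : C.StdSeq) (_h1 : q.1.1 = (C.g ^ (p.1.2 : ℤ)) p.1.1)
    (h2 : p.1.2 + q.1.2 ≤ C.d p.1.1) : C.StdSeq := ⟨(p.1.1, p.1.2 + q.1.2), h2⟩

/-- Closure `[𝒳]` of a set of standard sequences under the identity relation `≡`. -/
def cl (X : Set C.StdSeq) : Set C.StdSeq := {q | ∃ p ∈ X, C.lab q = C.lab p}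

/-- The set `[[^p]^∧]`. -/
def f7set (p : C.StdSeq) : Set C.StdSeq := C.cl (C.rcomp '' C.cl {C.lcomp p})

/-- Condition (f7): `E` is of type S. -/
def TypeS : Prop := ∀ p q : C.StdSeq, C.lab p = C.lab q → C.f7set p = C.f7set q

/-- The relation `R` on the set `𝓔` of formal sequences of standard sequences:
`u R v` iff `u = L(p)`, `v = L(q)` for standard sequences `p, q` with `^p ≡ ^q`. -/
def Rrel (u v : Set E × List (Set E)) : Prop :=
  ∃ p q : C.StdSeq, u = C.lab p ∧ v = C.lab q ∧ C.lab (C.lcomp p) = C.lab (C.lcomp q)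

end FracBrauerConfig

/-- for angles `e₁, …, eₙ` (`n ≥ 1`) with `P(g·eᵢ) = P(e_{i+1})`,
there exists `e ∈ E` with `L(g^{i-1}·e) = L(eᵢ)` for all `i` if and only if
`⋂_{i=1}^{n} g^{n-i}·L(eᵢ)` is nonempty. -/
theorem stmt7 {E : Type*} (C : FracBrauerConfig E) (n : ℕ) (hn : 1 ≤ n)
    (e : Fin n → E)
    (hcomp : ∀ i : Fin n, (h : (i : ℕ) + 1 < n) →
      C.P (C.g (e i)) = C.P (e ⟨(i : ℕ) + 1, h⟩)) :
    (∃ a : E, ∀ i : Fin n, C.L ((C.g ^ ((i : ℕ) : ℤ)) a) = C.L (e i)) ↔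
    (⋂ i : Fin n, (fun x => (C.g ^ ((n - 1 - (i : ℕ) : ℕ) : ℤ)) x) '' C.L (e i)).Nonempty := by
  constructor
  · rintro ⟨a, ha⟩
    refine ⟨(C.g ^ ((n - 1 : ℕ) : ℤ)) a, ?_⟩
    rw [Set.mem_iInter]
    intro i
    refine ⟨(C.g ^ ((i : ℕ) : ℤ)) a, ?_, ?_⟩
    · rw [← ha i]; exact C.mem_L _
    · have hi := i.isLt
      show (C.g ^ ((n - 1 - (i : ℕ) : ℕ) : ℤ)) ((C.g ^ ((i : ℕ) : ℤ)) a) = _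
      have h0 : ((n - 1 - (i : ℕ) : ℕ) : ℤ) + ((i : ℕ) : ℤ) = ((n - 1 : ℕ) : ℤ) := by omega
      rw [← Equiv.Perm.mul_apply, ← zpow_add, h0]
  · rintro ⟨x, hx⟩
    rw [Set.mem_iInter] at hx
    refine ⟨(C.g ^ (-((n - 1 : ℕ) : ℤ))) x, fun i => ?_⟩
    obtain ⟨y, hy, hxy⟩ := hx i
    have hi := i.isLt
    have key : (C.g ^ ((i : ℕ) : ℤ)) ((C.g ^ (-((n - 1 : ℕ) : ℤ))) x) = y := by
      rw [← hxy, ← Equiv.Perm.mul_apply, ← Equiv.Perm.mul_apply, ← zpow_add, ← zpow_add]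
      have h0 : ((i : ℕ) : ℤ) + -((n - 1 : ℕ) : ℤ) + ((n - 1 - (i : ℕ) : ℕ) : ℤ) = 0 := by
        omega
      rw [h0, zpow_zero]; rfl
    rw [key]
    exact (C.L_class (e i) y hy).symm
end

section
/- Let E be a fractional Brauer configuration and p, q standard sequences. If p ≡ q (the associated formal sequences of L-classes are equal), then ^p ≡ ^q if and only if p^∧ ≡ q^∧. -/
section Aux

variable {E : Type*} (C : FracBrauerConfig E)

lemma flatMap_singleton_map {α β : Type*} (f : α → β) (l : List α) :
    l.flatMap (fun a => [f a]) = l.map f := by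
  induction l <;> simp_all

lemma map_range_eq_iff {α : Type*} {f g : ℕ → α} {n m : ℕ} :
    (List.range n).map f = (List.range m).map g ↔ n = m ∧ ∀ i < n, f i = g i := by
  constructor
  · intro h
    have hn : n = m := by
      have := congrArg List.length h; simpa using this
    subst hn
    refine ⟨rfl, fun i hi => ?_⟩
    have := congrArg (fun l => l[i]?) h
    simpa [List.getElem?_map, List.getElem?_range, hi] using this
  · rintro ⟨rfl, h⟩
    exact List.map_congr_left (fun i hi => h i (List.mem_range.mp hi))

lemma zpow_apply_apply (a b : ℤ) (e : E) :
    (C.g ^ a) ((C.g ^ b) e) = (C.g ^ (a + b)) e := by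
  rw [zpow_add, Equiv.Perm.mul_apply]

lemma shiftP (e₁ e₂ : E) (hd : C.d e₁ = C.d e₂) (k : ℤ) :
    C.P ((C.g ^ (k - (C.d e₁ : ℤ))) e₁) = C.P ((C.g ^ (k - (C.d e₁ : ℤ))) e₂) ↔
      C.P ((C.g ^ k) e₁) = C.P ((C.g ^ k) e₂) := by
  have h := C.f4 ((C.g ^ (k - (C.d e₁ : ℤ))) e₁) ((C.g ^ (k - (C.d e₁ : ℤ))) e₂)
  rw [C.f3, C.f3, zpow_apply_apply, zpow_apply_apply, ← hd] at h
  rw [h]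
  have : (C.d e₁ : ℤ) + (k - (C.d e₁ : ℤ)) = k := by ring
  rw [this]

lemma shiftL (e₁ e₂ : E) (hd : C.d e₁ = C.d e₂) (k : ℤ) :
    C.L ((C.g ^ (k - (C.d e₁ : ℤ))) e₁) = C.L ((C.g ^ (k - (C.d e₁ : ℤ))) e₂) ↔
      C.L ((C.g ^ k) e₁) = C.L ((C.g ^ k) e₂) := by
  have h := C.f5 ((C.g ^ (k - (C.d e₁ : ℤ))) e₁) ((C.g ^ (k - (C.d e₁ : ℤ))) e₂)
  rw [C.f3, C.f3, zpow_apply_apply, zpow_apply_apply, ← hd] at h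
  rw [h]
  have : (C.d e₁ : ℤ) + (k - (C.d e₁ : ℤ)) = k := by ring
  rw [this]

end Aux


/-- if `p ≡ q` for standard sequences `p, q`, then
`^p ≡ ^q` if and only if `p^∧ ≡ q^∧`. -/
theorem stmt11 {E : Type*} (C : FracBrauerConfig E) (p q : C.StdSeq)
    (hpq : C.lab p = C.lab q) :
    C.lab (C.lcomp p) = C.lab (C.lcomp q) ↔ C.lab (C.rcomp p) = C.lab (C.rcomp q) := by
  obtain ⟨⟨e₁, n₁⟩, h₁⟩ := p
  obtain ⟨⟨e₂, n₂⟩, h₂⟩ := q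
  dsimp only at h₁ h₂
  simp only [FracBrauerConfig.lab, Prod.mk.injEq, List.pure_def, List.bind_eq_flatMap,
    flatMap_singleton_map, List.map_map, Function.comp_def, map_range_eq_iff] at hpq
  obtain ⟨hP, hn, hL⟩ := hpq
  subst hn
  simp only [FracBrauerConfig.lab, FracBrauerConfig.lcomp, FracBrauerConfig.rcomp,
    Prod.mk.injEq, List.pure_def, List.bind_eq_flatMap, flatMap_singleton_map,
    List.map_map, Function.comp_def, map_range_eq_iff, C.f3]
  rcases eq_or_ne (C.d e₁) (C.d e₂) with hd | hd
  · have hlen : C.d e₁ - n₁ = C.d e₂ - n₁ := by omega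
    have hPiff : C.P ((C.g ^ ((n₁ : ℤ) - (C.d e₁ : ℤ))) e₁) =
        C.P ((C.g ^ ((n₁ : ℤ) - (C.d e₂ : ℤ))) e₂) ↔
        C.P ((C.g ^ (n₁ : ℤ)) e₁) = C.P ((C.g ^ (n₁ : ℤ)) e₂) := by
      rw [← hd]; exact shiftP C e₁ e₂ hd (n₁ : ℤ)
    have hLiff : ∀ i : ℕ,
        (C.L ((C.g ^ (i : ℤ)) ((C.g ^ ((n₁ : ℤ) - (C.d e₁ : ℤ))) e₁)) =
          C.L ((C.g ^ (i : ℤ)) ((C.g ^ ((n₁ : ℤ) - (C.d e₂ : ℤ))) e₂)) ↔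
        C.L ((C.g ^ (i : ℤ)) ((C.g ^ (n₁ : ℤ)) e₁)) =
          C.L ((C.g ^ (i : ℤ)) ((C.g ^ (n₁ : ℤ)) e₂))) := by
      intro i
      rw [← hd, zpow_apply_apply, zpow_apply_apply, zpow_apply_apply, zpow_apply_apply]
      have he : (i : ℤ) + ((n₁ : ℤ) - (C.d e₁ : ℤ)) = ((i : ℤ) + n₁) - (C.d e₁ : ℤ) := by
        ring
      rw [he]
      exact shiftL C e₁ e₂ hd ((i : ℤ) + n₁)
    constructor
    · rintro ⟨hP', -, hL'⟩
      exact ⟨hPiff.mpr hP', hlen, fun i hi => (hLiff i).mpr (hL' i hi)⟩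
    · rintro ⟨hP', -, hL'⟩
      refine ⟨hPiff.mp hP', hlen, fun i hi => (hLiff i).mp ?_⟩
      exact hL' i (by omega)
  · constructor
    · rintro ⟨-, hlen, -⟩; omega
    · rintro ⟨-, hlen, -⟩; omega
end

section
/- Let E be a fractional Brauer configuration and p a standard sequence of E. Then [^[p^∧]] = [[^p]^∧], where ^(-) and (-)^∧ denote left and right complements and [𝒳] the closure under the identity relation ≡. -/
namespace FracBrauerConfig

variable {E : Type*} (C : FracBrauerConfig E)

lemma pow_pow (x y : ℤ) (a : E) : (C.g ^ x) ((C.g ^ y) a) = (C.g ^ (x + y)) a := by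
  rw [zpow_add, Equiv.Perm.mul_apply]

lemma d_pow (x : ℤ) (a : E) : C.d ((C.g ^ x) a) = C.d a := C.f3 a x

lemma coe_map {α : Type*} (f : ℤ → α) (l : List ℕ) :
    List.map f (l : List ℤ) = l.map (fun i : ℕ => f (i : ℤ)) := by
  induction l with
  | nil => rfl
  | cons x xs ih =>
    show List.map f ((x : ℤ) :: (xs : List ℤ)) = _
    rw [List.map_cons, ih]; rfl

lemma lab_eq_iff (a b : E) (m₁ m₂ : ℕ) (h₁ : m₁ ≤ C.d a) (h₂ : m₂ ≤ C.d b) :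
    C.lab ⟨(a, m₁), h₁⟩ = C.lab ⟨(b, m₂), h₂⟩ ↔
      C.P a = C.P b ∧ m₁ = m₂ ∧
        ∀ i : ℕ, i < m₁ → C.L ((C.g ^ (i : ℤ)) a) = C.L ((C.g ^ (i : ℤ)) b) := by
  simp only [lab, Prod.mk.injEq, coe_map]
  constructor
  · rintro ⟨hP, hl⟩
    have hlen : m₁ = m₂ := by
      have := congrArg List.length hl
      simpa only [List.length_map, List.length_range] using this
    subst hlen
    refine ⟨hP, rfl, fun i hi => ?_⟩
    have := congrArg (fun l => l[i]?) hl
    simp only [List.getElem?_map, List.getElem?_range hi, Option.map_some] at this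
    exact Option.some.inj this
  · rintro ⟨hP, rfl, hL⟩
    refine ⟨hP, ?_⟩
    apply List.ext_get
    · simp
    · intro i hi _
      simp only [List.get_eq_getElem, List.getElem_map, List.getElem_range]
      exact hL i (by simpa using hi)

lemma lcomp_lcomp (q : C.StdSeq) :
    C.lcomp (C.lcomp q) =
      ⟨(C.sigma q.1.1, q.1.2), by simp only [sigma, C.d_pow]; exact q.2⟩ := by
  obtain ⟨⟨a, m⟩, hm⟩ := q
  replace hm : m ≤ C.d a := hm
  apply Subtype.ext
  simp only [lcomp, sigma, C.d_pow, C.pow_pow, Prod.mk.injEq]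
  constructor
  · congr 1
    congr 1
    omega
  · omega

lemma rcomp_rcomp (q : C.StdSeq) :
    C.rcomp (C.rcomp q) =
      ⟨((C.g ^ (-(C.d q.1.1 : ℤ))) q.1.1, q.1.2), by simp only [C.d_pow]; exact q.2⟩ := by
  obtain ⟨⟨a, m⟩, hm⟩ := q
  replace hm : m ≤ C.d a := hm
  apply Subtype.ext
  simp only [rcomp, C.d_pow, C.pow_pow, Prod.mk.injEq]
  constructor
  · congr 1
    congr 1
    omega
  · omega

lemma rcomp_lcomp (q : C.StdSeq) : C.rcomp (C.lcomp q) = q := by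
  obtain ⟨⟨a, m⟩, hm⟩ := q
  replace hm : m ≤ C.d a := hm
  apply Subtype.ext
  simp only [rcomp, lcomp, C.d_pow, C.pow_pow, Prod.mk.injEq]
  constructor
  · have : ((C.d a - m : ℕ) : ℤ) - (C.d a : ℤ) + (m : ℤ) = 0 := by omega
    rw [this]; simp
  · omega

lemma lcomp_rcomp (q : C.StdSeq) : C.lcomp (C.rcomp q) = q := by
  obtain ⟨⟨a, m⟩, hm⟩ := q
  replace hm : m ≤ C.d a := hm
  apply Subtype.ext
  simp only [rcomp, lcomp, C.d_pow, C.pow_pow, Prod.mk.injEq]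
  constructor
  · have : ((C.d a - m : ℕ) : ℤ) + ((m : ℤ) - (C.d a : ℤ)) = 0 := by omega
    rw [this]; simp
  · omega

lemma lab_lcomp_lcomp {q r : C.StdSeq} (h : C.lab q = C.lab r) :
    C.lab (C.lcomp (C.lcomp q)) = C.lab (C.lcomp (C.lcomp r)) := by
  obtain ⟨⟨a, m⟩, hm⟩ := q
  obtain ⟨⟨b, k⟩, hk⟩ := r
  rw [C.lab_eq_iff] at h
  obtain ⟨hP, rfl, hL⟩ := h
  rw [C.lcomp_lcomp, C.lcomp_lcomp, C.lab_eq_iff]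
  refine ⟨(C.f4 a b).mp hP, rfl, fun i hi => ?_⟩
  have := (C.f5 ((C.g ^ (i : ℤ)) a) ((C.g ^ (i : ℤ)) b)).mp (hL i hi)
  rw [C.d_pow, C.d_pow, C.pow_pow, C.pow_pow] at this
  simp only [sigma, C.pow_pow]
  rwa [add_comm (C.d a : ℤ) (i : ℤ), add_comm (C.d b : ℤ) (i : ℤ)] at this

lemma lab_rcomp_rcomp {q r : C.StdSeq} (h : C.lab q = C.lab r) :
    C.lab (C.rcomp (C.rcomp q)) = C.lab (C.rcomp (C.rcomp r)) := by
  obtain ⟨⟨a, m⟩, hm⟩ := q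
  obtain ⟨⟨b, k⟩, hk⟩ := r
  rw [C.lab_eq_iff] at h
  obtain ⟨hP, rfl, hL⟩ := h
  rw [C.rcomp_rcomp, C.rcomp_rcomp, C.lab_eq_iff]
  refine ⟨?_, rfl, fun i hi => ?_⟩
  · have h4 := (C.f4 ((C.g ^ (-(C.d a : ℤ))) a) ((C.g ^ (-(C.d b : ℤ))) b)).mpr
    simp only [C.d_pow, C.pow_pow, add_neg_cancel] at h4
    exact h4 (by simpa using hP)
  · have h5 := (C.f5 ((C.g ^ ((i : ℤ) + -(C.d a : ℤ))) a)
      ((C.g ^ ((i : ℤ) + -(C.d b : ℤ))) b)).mpr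
    simp only [C.d_pow, C.pow_pow] at h5 ⊢
    have e1 : (C.d a : ℤ) + ((i : ℤ) + -(C.d a : ℤ)) = (i : ℤ) := by ring
    have e2 : (C.d b : ℤ) + ((i : ℤ) + -(C.d b : ℤ)) = (i : ℤ) := by ring
    rw [e1, e2] at h5
    exact h5 (hL i hi)

end FracBrauerConfig

/-- for any standard sequence `p`, `[^[p^∧]] = [[^p]^∧]`. -/
theorem stmt12 {E : Type*} (C : FracBrauerConfig E) (p : C.StdSeq) :
    C.cl (C.lcomp '' C.cl {C.rcomp p}) = C.cl (C.rcomp '' C.cl {C.lcomp p}) := by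
  ext s
  simp only [FracBrauerConfig.cl, Set.mem_setOf_eq, Set.mem_image, Set.mem_singleton_iff]
  constructor
  · rintro ⟨_, ⟨q, ⟨_, rfl, hq⟩, rfl⟩, hs⟩
    refine ⟨C.rcomp (C.lcomp (C.lcomp q)),
      ⟨C.lcomp (C.lcomp q), ⟨C.lcomp p, rfl, ?_⟩, rfl⟩, ?_⟩
    · have := C.lab_lcomp_lcomp hq
      rwa [C.lcomp_rcomp] at this
    · rwa [C.rcomp_lcomp]
  · rintro ⟨_, ⟨q, ⟨_, rfl, hq⟩, rfl⟩, hs⟩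
    refine ⟨C.lcomp (C.rcomp (C.rcomp q)),
      ⟨C.rcomp (C.rcomp q), ⟨C.rcomp p, rfl, ?_⟩, rfl⟩, ?_⟩
    · have := C.lab_rcomp_rcomp hq
      rwa [C.rcomp_lcomp] at this
    · rwa [C.lcomp_rcomp]
end
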